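/- Let V ∈ L¹(ℝ) with XV ∈ L¹(ℝ) and Im(k) ≥ 0 (including k = 0). Then the solution m₊(k;·) of the modified Lippmann–Schwinger equation satisfies |m₊(k;x) − 1| ≤ exp( ∫ₓ^∞ (y − x)|V(y)| dy ) − 1 for all x ∈ ℝ, and moreover |m₊(k;x)| ≤ 2(1 + |x|) e^{‖V‖₁ + 2‖XV‖₁}. -/

import Mathlib

open MeasureTheory Filter Set

/-- The kernel `D_k(t) = ∫₀^t e^{2iks} ds = (e^{2ikt} − 1)/(2ik)` (equal to `t` for `k = 0`). -/
noncomputable def Dker (k : ℂ) (t : ℝ) : ℂ :=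
  ∫ s in (0:ℝ)..t, Complex.exp (2 * Complex.I * k * s)

lemma Dker_bound {k : ℂ} (hk : 0 ≤ k.im) {t : ℝ} (ht : 0 ≤ t) : ‖Dker k t‖ ≤ t := by
  have h := intervalIntegral.norm_integral_le_of_norm_le_const (C := 1)
    (f := fun s : ℝ => Complex.exp (2 * Complex.I * k * s)) (a := 0) (b := t) ?_
  · simpa [Dker, abs_of_nonneg ht] using h
  · intro s hs
    rw [Set.uIoc_of_le ht] at hs
    have hs0 : 0 < s := hs.1
    rw [Complex.norm_exp]
    have hre : (2 * Complex.I * k * (s:ℂ)).re = -(2 * s * k.im) := by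
      simp [Complex.mul_re, Complex.mul_im]
      ring
    rw [hre]
    rw [Real.exp_le_one_iff]
    nlinarith

lemma key_E (w ψ : ℝ → ℝ) (hw : Integrable w) (hwm : Measurable w) (hw0 : ∀ y, 0 ≤ w y)
    (hψdef : ∀ t, ψ t = ∫ z in Ioi t, w z) :
    ∀ (n : ℕ) (t : ℝ), (∫ y in Ioi t, w y * ψ y ^ n) = ψ t ^ (n+1) / (n+1) := by
  have hψ0 : ∀ t, 0 ≤ ψ t := fun t => (hψdef t) ▸
    setIntegral_nonneg measurableSet_Ioi fun y _ => hw0 y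
  have hψanti : Antitone ψ := by
    intro s t hst
    rw [hψdef s, hψdef t]
    exact setIntegral_mono_set hw.integrableOn
      (Filter.Eventually.of_forall fun y => hw0 y)
      (HasSubset.Subset.eventuallyLE (Set.Ioi_subset_Ioi hst))
  have hψm : Measurable ψ := hψanti.measurable
  have hIn : ∀ (n : ℕ) (t : ℝ), IntegrableOn (fun y => w y * ψ y ^ n) (Ioi t) := by
    intro n t
    apply Integrable.mono' ((hw.const_mul (ψ t ^ n)).integrableOn)
      ((hwm.mul (hψm.pow_const n)).aestronglyMeasurable)
    rw [ae_restrict_iff' measurableSet_Ioi]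
    apply Filter.Eventually.of_forall
    intro y hy
    have h1 : ψ y ^ n ≤ ψ t ^ n := pow_le_pow_left₀ (hψ0 y) (hψanti (le_of_lt hy)) n
    rw [Real.norm_eq_abs, Pi.mul_apply, abs_of_nonneg (mul_nonneg (hw0 y) (pow_nonneg (hψ0 y) n))]
    nlinarith [hw0 y]
  intro n
  induction n with
  | zero => intro t; simp [hψdef t]
  | succ n ih =>
    intro t
    have hsplit : ∀ y, t < y → ψ t - ψ y = ∫ z in Ioc t y, w z := by
      intro y hy
      have h1 : ψ t = (∫ z in Ioc t y, w z) + ψ y := by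
        rw [hψdef t, hψdef y]
        rw [← setIntegral_union (Set.Ioc_disjoint_Ioi le_rfl) measurableSet_Ioi
          hw.integrableOn hw.integrableOn, Set.Ioc_union_Ioi_eq_Ioi (le_of_lt hy)]
      linarith
    set f : ℝ → ℝ → ℝ := fun y z => (w y * ψ y ^ n) * (Iic y).indicator w z with hf
    have hA1 : (∫ y in Ioi t, (w y * ψ y ^ n) * (ψ t - ψ y))
        = ψ t * (∫ y in Ioi t, w y * ψ y ^ n) - ∫ y in Ioi t, w y * ψ y ^ (n+1) := by
      rw [← integral_const_mul, ← integral_sub ((hIn n t).const_mul _) (hIn (n+1) t)]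
      apply setIntegral_congr_fun measurableSet_Ioi
      intro y _; simp only; ring
    have huncurry : Function.uncurry f =
        Set.indicator {q : ℝ × ℝ | q.2 ≤ q.1} (fun q => (w q.1 * ψ q.1 ^ n) * w q.2) := by
      funext p
      rcases le_or_gt p.2 p.1 with h | h
      · simp [Function.uncurry, hf, Set.indicator_apply, h]
      · simp [Function.uncurry, hf, Set.indicator_apply, h.not_ge, Set.mem_Iic]
    have hfint : Integrable (Function.uncurry f)
        ((volume.restrict (Ioi t)).prod (volume.restrict (Ioi t))) := by
      apply Integrable.mono'
        (g := fun p : ℝ × ℝ => (ψ t ^ n * w p.1) * w p.2)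
        (((hw.const_mul (ψ t ^ n)).integrableOn).mul_prod hw.integrableOn)
      · rw [huncurry]
        apply Measurable.aestronglyMeasurable
        apply Measurable.indicator
        · exact ((hwm.comp measurable_fst).mul
            ((hψm.comp measurable_fst).pow_const n)).mul (hwm.comp measurable_snd)
        · exact isClosed_le continuous_snd continuous_fst |>.measurableSet
      · rw [Measure.prod_restrict, ae_restrict_iff' (measurableSet_Ioi.prod measurableSet_Ioi)]
        apply Filter.Eventually.of_forall
        rintro ⟨y, z⟩ ⟨hy, hz⟩
        simp only [Function.uncurry, hf]
        have h2 : ψ y ^ n ≤ ψ t ^ n := pow_le_pow_left₀ (hψ0 y) (hψanti (le_of_lt hy)) n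
        have h3 : (Iic y).indicator w z ≤ w z := by
          rcases le_or_gt z y with h | h
          · simp [Set.indicator_apply, h]
          · simp [Set.indicator_apply, h.not_ge, hw0 z]
        have h4 : 0 ≤ (Iic y).indicator w z := by
          rcases le_or_gt z y with h | h
          · simp [Set.indicator_apply, h, hw0 z]
          · simp [Set.indicator_apply, h.not_ge]
        rw [Real.norm_eq_abs, abs_of_nonneg
          (mul_nonneg (mul_nonneg (hw0 y) (pow_nonneg (hψ0 y) n)) h4)]
        calc w y * ψ y ^ n * (Iic y).indicator w z
            ≤ w y * ψ t ^ n * (Iic y).indicator w z := by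
              have := mul_le_mul_of_nonneg_left h2 (hw0 y)
              exact mul_le_mul_of_nonneg_right (by linarith) h4
          _ ≤ w y * ψ t ^ n * w z :=
              mul_le_mul_of_nonneg_left h3
                (mul_nonneg (hw0 y) (pow_nonneg (hψ0 t) n))
          _ = ψ t ^ n * w y * w z := by ring
    have hA2 : (∫ y in Ioi t, (w y * ψ y ^ n) * (ψ t - ψ y))
        = (∫ z in Ioi t, w z * ψ z ^ (n+1)) / (n+1) := by
      have e1 : (∫ y in Ioi t, (w y * ψ y ^ n) * (ψ t - ψ y))
          = ∫ y in Ioi t, ∫ z in Ioi t, f y z := by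
        apply setIntegral_congr_fun measurableSet_Ioi
        intro y hy
        simp only [hf]
        rw [integral_const_mul, setIntegral_indicator measurableSet_Iic, Set.Ioi_inter_Iic,
          hsplit y hy]
      rw [e1, integral_integral_swap hfint]
      have e2 : ∀ z ∈ Ioi t, (∫ y in Ioi t, f y z) = w z * ψ z ^ (n+1) / (n+1) := by
        intro z hz
        have e3 : ∀ y, f y z = (Ici z).indicator (fun y => (w y * ψ y ^ n) * w z) y := by
          intro y
          rcases le_or_gt z y with h | h
          · simp [hf, Set.indicator_apply, h, Set.mem_Iic, Set.mem_Ici]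
          · simp [hf, Set.indicator_apply, h.not_ge, Set.mem_Iic, Set.mem_Ici]
        simp_rw [e3]
        rw [setIntegral_indicator measurableSet_Ici,
          Set.inter_eq_self_of_subset_right (Set.Ici_subset_Ioi.mpr hz),
          integral_Ici_eq_integral_Ioi, integral_mul_const, ih z]
        ring
      rw [setIntegral_congr_fun measurableSet_Ioi e2, integral_div]
    have hcast : ((n:ℝ) + 1) ≠ 0 := by positivity
    have hkey := hA1.symm.trans hA2
    rw [ih t] at hkey
    have hpow : ψ t * (ψ t ^ (n+1) / ((n:ℝ)+1)) = ψ t ^ (n+2) / ((n:ℝ)+1) := by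
      rw [pow_succ]; ring
    rw [hpow] at hkey
    have : ((n:ℝ) + 2) ≠ 0 := by positivity
    push_cast
    field_simp at hkey ⊢
    linarith

lemma volterra_key (w u : ℝ → ℝ) (x₀ : ℝ) (hw : Integrable w) (hwm : Measurable w)
    (hw0 : ∀ y, 0 ≤ w y) (hu : AEStronglyMeasurable u volume) (hu0 : ∀ y, 0 ≤ u y)
    (C : ℝ) (huC : ∀ y, u y ≤ C)
    (hrec : ∀ y, x₀ ≤ y → u y ≤ 1 + ∫ z in Ioi y, w z * u z) :
    ∫ z in Ioi x₀, w z * u z ≤ Real.exp (∫ z in Ioi x₀, w z) - 1 := by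
  set ψ : ℝ → ℝ := fun t => ∫ z in Ioi t, w z with hψ
  have hψdef : ∀ t, ψ t = ∫ z in Ioi t, w z := fun t => rfl
  have E := key_E w ψ hw hwm hw0 hψdef
  have hψ0 : ∀ t, 0 ≤ ψ t := fun t => setIntegral_nonneg measurableSet_Ioi fun y _ => hw0 y
  have hψanti : Antitone ψ := by
    intro s t hst
    exact setIntegral_mono_set hw.integrableOn
      (Filter.Eventually.of_forall fun y => hw0 y)
      (HasSubset.Subset.eventuallyLE (Set.Ioi_subset_Ioi hst))
  have hψm : Measurable ψ := hψanti.measurable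
  have hIn : ∀ (n : ℕ) (t : ℝ), IntegrableOn (fun y => w y * ψ y ^ n) (Ioi t) := by
    intro n t
    apply Integrable.mono' ((hw.const_mul (ψ t ^ n)).integrableOn)
      ((hwm.mul (hψm.pow_const n)).aestronglyMeasurable)
    rw [ae_restrict_iff' measurableSet_Ioi]
    apply Filter.Eventually.of_forall
    intro y hy
    have h1 : ψ y ^ n ≤ ψ t ^ n := pow_le_pow_left₀ (hψ0 y) (hψanti (le_of_lt hy)) n
    rw [Real.norm_eq_abs, Pi.mul_apply, abs_of_nonneg (mul_nonneg (hw0 y) (pow_nonneg (hψ0 y) n))]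
    nlinarith [hw0 y]
  have hC0 : 0 ≤ C := le_trans (hu0 x₀) (huC x₀)
  have hwu : Integrable (fun z => w z * u z) := by
    apply Integrable.mono' (hw.const_mul C) (hwm.aestronglyMeasurable.mul hu)
    apply Filter.Eventually.of_forall
    intro z
    show ‖w z * u z‖ ≤ C * w z
    rw [Real.norm_eq_abs, abs_of_nonneg (mul_nonneg (hw0 z) (hu0 z))]
    nlinarith [hw0 z, huC z, hu0 z]
  -- the integrated recursion step
  have intQ : ∀ n : ℕ,
      (∀ y, x₀ ≤ y → u y ≤ ∑ j ∈ Finset.range (n+1), ψ y ^ j / (j.factorial : ℝ)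
        + C * ψ y ^ n / (n.factorial : ℝ)) →
      ∀ t, x₀ ≤ t → (∫ z in Ioi t, w z * u z)
        ≤ ∑ j ∈ Finset.range (n+1), ψ t ^ (j+1) / ((j+1).factorial : ℝ)
          + C * ψ t ^ (n+1) / ((n+1).factorial : ℝ) := by
    intro n hQ t ht
    have hFint : IntegrableOn (fun z => ∑ j ∈ Finset.range (n+1),
        (w z * ψ z ^ j) / (j.factorial : ℝ) + (C / (n.factorial : ℝ)) * (w z * ψ z ^ n))
        (Ioi t) := by
      apply Integrable.add
      · exact integrable_finset_sum _ (fun j _ => (hIn j t).div_const _)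
      · exact (hIn n t).const_mul _
    have step1 : (∫ z in Ioi t, w z * u z) ≤ ∫ z in Ioi t,
        (∑ j ∈ Finset.range (n+1), (w z * ψ z ^ j) / (j.factorial : ℝ)
          + (C / (n.factorial : ℝ)) * (w z * ψ z ^ n)) := by
      apply setIntegral_mono_on hwu.integrableOn hFint measurableSet_Ioi
      intro z hz
      have hq := hQ z (le_trans ht (le_of_lt hz))
      have := mul_le_mul_of_nonneg_left hq (hw0 z)
      calc w z * u z ≤ w z * (∑ j ∈ Finset.range (n+1), ψ z ^ j / (j.factorial : ℝ)
            + C * ψ z ^ n / (n.factorial : ℝ)) := this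
        _ = ∑ j ∈ Finset.range (n+1), (w z * ψ z ^ j) / (j.factorial : ℝ)
            + (C / (n.factorial : ℝ)) * (w z * ψ z ^ n) := by
          rw [mul_add, Finset.mul_sum]
          congr 1
          · exact Finset.sum_congr rfl fun j _ => by ring
          · ring
    have step2 : (∫ z in Ioi t,
        (∑ j ∈ Finset.range (n+1), (w z * ψ z ^ j) / (j.factorial : ℝ)
          + (C / (n.factorial : ℝ)) * (w z * ψ z ^ n)))
        = ∑ j ∈ Finset.range (n+1), ψ t ^ (j+1) / ((j+1).factorial : ℝ)
          + C * ψ t ^ (n+1) / ((n+1).factorial : ℝ) := by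
      rw [integral_add (integrable_finset_sum _ (fun j _ => (hIn j t).div_const _))
        ((hIn n t).const_mul _)]
      congr 1
      · rw [integral_finset_sum _ (fun j _ => (hIn j t).div_const _)]
        apply Finset.sum_congr rfl
        intro j _
        have hj : ((j:ℝ)+1) ≠ 0 := by positivity
        have hjf : ((j.factorial:ℝ)) ≠ 0 := Nat.cast_ne_zero.mpr j.factorial_ne_zero
        rw [integral_div, E j t, Nat.factorial_succ]
        push_cast
        field_simp
      · have hn : ((n:ℝ)+1) ≠ 0 := by positivity
        have hnf : ((n.factorial:ℝ)) ≠ 0 := Nat.cast_ne_zero.mpr n.factorial_ne_zero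
        rw [integral_const_mul, E n t, Nat.factorial_succ]
        push_cast
        field_simp
    linarith [step1, step2.le, step2.ge]
  have Q : ∀ n : ℕ, ∀ y, x₀ ≤ y → u y ≤ ∑ j ∈ Finset.range (n+1), ψ y ^ j / (j.factorial : ℝ)
      + C * ψ y ^ n / (n.factorial : ℝ) := by
    intro n
    induction n with
    | zero =>
      intro y hy
      rw [Finset.sum_range_one]
      simp only [pow_zero, Nat.factorial_zero, Nat.cast_one, div_one, mul_one]
      have := huC y
      linarith
    | succ n ih =>
      intro y hy
      have h1 := hrec y hy
      have h2 := intQ n ih y hy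
      have h3 : (1:ℝ) + (∑ j ∈ Finset.range (n+1), ψ y ^ (j+1) / ((j+1).factorial : ℝ)
          + C * ψ y ^ (n+1) / ((n+1).factorial : ℝ))
          = ∑ j ∈ Finset.range (n+2), ψ y ^ j / (j.factorial : ℝ)
            + C * ψ y ^ (n+1) / ((n+1).factorial : ℝ) := by
        rw [Finset.sum_range_succ' (fun j => ψ y ^ j / (j.factorial : ℝ)) (n+1)]
        simp [Nat.factorial_zero]
        ring
      calc u y ≤ 1 + ∫ z in Ioi y, w z * u z := h1
        _ ≤ 1 + (∑ j ∈ Finset.range (n+1), ψ y ^ (j+1) / ((j+1).factorial : ℝ)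
            + C * ψ y ^ (n+1) / ((n+1).factorial : ℝ)) := by linarith
        _ = _ := h3
  -- conclude
  have hfin : ∀ n : ℕ, (∫ z in Ioi x₀, w z * u z)
      ≤ (Real.exp (ψ x₀) - 1) + C * (ψ x₀ ^ (n+1) / ((n+1).factorial : ℝ)) := by
    intro n
    have h1 := intQ n (Q n) x₀ le_rfl
    have h2 : ∑ j ∈ Finset.range (n+1), ψ x₀ ^ (j+1) / ((j+1).factorial : ℝ)
        ≤ Real.exp (ψ x₀) - 1 := by
      have h3 : (1:ℝ) + ∑ j ∈ Finset.range (n+1), ψ x₀ ^ (j+1) / ((j+1).factorial : ℝ)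
          = ∑ j ∈ Finset.range (n+2), ψ x₀ ^ j / (j.factorial : ℝ) := by
        rw [Finset.sum_range_succ' (fun j => ψ x₀ ^ j / (j.factorial : ℝ)) (n+1)]
        simp [Nat.factorial_zero]
        ring
      have h4 := Real.sum_le_exp_of_nonneg (hψ0 x₀) (n+2)
      rw [← h3] at h4
      linarith
    have h5 : C * ψ x₀ ^ (n+1) / ((n+1).factorial : ℝ)
        = C * (ψ x₀ ^ (n+1) / ((n+1).factorial : ℝ)) := by ring
    linarith [h5.le, h5.ge]
  have htend : Tendsto (fun n : ℕ => (Real.exp (ψ x₀) - 1)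
      + C * (ψ x₀ ^ (n+1) / ((n+1).factorial : ℝ))) atTop
      (nhds ((Real.exp (ψ x₀) - 1) + C * 0)) := by
    apply Tendsto.const_add
    apply Tendsto.const_mul
    exact (FloorSemiring.tendsto_pow_div_factorial_atTop (ψ x₀)).comp
      (tendsto_add_atTop_nat 1)
  rw [mul_zero, add_zero] at htend
  exact ge_of_tendsto' htend hfin

/-- For `V ∈ L¹(ℝ)` with `XV ∈ L¹(ℝ)` and `Im k ≥ 0` (`k = 0` allowed), the
bounded solution `m₊(k;·)` of the modified Lippmann–Schwinger equation satisfies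
`|m₊(k;x) − 1| ≤ exp(∫ₓ^∞ (y−x)|V(y)| dy) − 1` and
`|m₊(k;x)| ≤ 2(1+|x|) e^{‖V‖₁ + 2‖XV‖₁}`. -/
theorem stmt15 (V : ℝ → ℂ) (hV : Integrable V)
    (hXV : Integrable (fun x => |x| * ‖V x‖))
    (k : ℂ) (hk : 0 ≤ k.im)
    (m : ℝ → ℂ) (hm_meas : Measurable m) (hm_bdd : ∃ C, ∀ x, ‖m x‖ ≤ C)
    (heq : ∀ x, m x = 1 + ∫ y in Set.Ioi x, Dker k (y - x) * V y * m y) :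
    (∀ x, ‖m x - 1‖ ≤ Real.exp (∫ y in Set.Ioi x, (y - x) * ‖V y‖) - 1) ∧
    (∀ x, ‖m x‖ ≤ 2 * (1 + |x|) *
      Real.exp ((∫ y, ‖V y‖) + 2 * ∫ y, |y| * ‖V y‖)) := by
  classical
  obtain ⟨C, hC⟩ := hm_bdd
  have hC0 : 0 ≤ C := (norm_nonneg (m 0)).trans (hC 0)
  have hVn : AEMeasurable (fun y => ‖V y‖) volume := hV.aestronglyMeasurable.norm.aemeasurable
  set ν : ℝ → ℝ := fun y => max (hVn.mk _ y) 0 with hνdef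
  have hνm : Measurable ν := hVn.measurable_mk.max measurable_const
  have hνae : (fun y => ‖V y‖) =ᵐ[volume] ν := by
    filter_upwards [hVn.ae_eq_mk] with y hy
    rw [hνdef]
    simp only
    rw [← hy, max_eq_left (norm_nonneg _)]
  have hν0 : ∀ y, 0 ≤ ν y := fun y => le_max_right _ _
  have hνint : Integrable ν := hV.norm.congr hνae
  have hXνint : Integrable (fun y => |y| * ν y) := by
    apply hXV.congr
    filter_upwards [hνae] with y hy
    rw [hy]
  have hXν0 : 0 ≤ ∫ y, |y| * ‖V y‖ :=
    integral_nonneg fun y => mul_nonneg (abs_nonneg y) (norm_nonneg _)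
  have hwm_int : ∀ w : ℝ → ℝ, Measurable w → (∀ z, 0 ≤ w z) → Integrable w →
      Integrable (fun z => w z * ‖m z‖) := by
    intro w hwm hw0 hwint
    apply Integrable.mono' (hwint.const_mul C)
      (hwm.mul hm_meas.norm).aestronglyMeasurable
    apply Filter.Eventually.of_forall
    intro z
    rw [Real.norm_eq_abs, Pi.mul_apply, abs_of_nonneg (mul_nonneg (hw0 z) (norm_nonneg _))]
    have := hC z
    nlinarith [hw0 z, norm_nonneg (m z)]
  have hbound : ∀ (y : ℝ) (w : ℝ → ℝ), Measurable w → (∀ z, 0 ≤ w z) → Integrable w →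
      (∀ z, y < z → (z - y) * ν z ≤ w z) →
      ‖∫ z in Set.Ioi y, Dker k (z - y) * V z * m z‖ ≤ ∫ z in Set.Ioi y, w z * ‖m z‖ := by
    intro y w hwm hw0 hwint hdom
    refine (norm_integral_le_integral_norm _).trans ?_
    apply integral_mono_of_nonneg (Filter.Eventually.of_forall fun z => norm_nonneg _)
      (hwm_int w hwm hw0 hwint).integrableOn
    filter_upwards [ae_restrict_of_ae hνae, ae_restrict_mem measurableSet_Ioi] with z hz1 hz2
    have hz2' : y < z := hz2
    have hd : ‖Dker k (z - y)‖ ≤ z - y := Dker_bound hk (by linarith)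
    rw [norm_mul, norm_mul, hz1]
    calc ‖Dker k (z - y)‖ * ν z * ‖m z‖ ≤ ((z - y) * ν z) * ‖m z‖ := by
          have h1 := mul_le_mul_of_nonneg_right hd (hν0 z)
          exact mul_le_mul_of_nonneg_right h1 (norm_nonneg _)
      _ ≤ w z * ‖m z‖ := mul_le_mul_of_nonneg_right (hdom z hz2') (norm_nonneg _)
  constructor
  · -- first conclusion
    intro x
    set w : ℝ → ℝ := fun z => max (z - x) 0 * ν z with hwdef
    have hwm : Measurable w := ((measurable_id.sub_const x).max measurable_const).mul hνm
    have hw0 : ∀ z, 0 ≤ w z := fun z => mul_nonneg (le_max_right _ _) (hν0 z)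
    have hwint : Integrable w := by
      apply Integrable.mono' (g := fun z => |z| * ν z + |x| * ν z)
        (hXνint.add (hνint.const_mul |x|)) hwm.aestronglyMeasurable
      apply Filter.Eventually.of_forall
      intro z
      rw [Real.norm_eq_abs, abs_of_nonneg (hw0 z)]
      show max (z - x) 0 * ν z ≤ |z| * ν z + |x| * ν z
      have h1 : max (z - x) 0 ≤ |z| + |x| := by
        apply max_le
        · have := le_abs_self z
          have := neg_abs_le x
          linarith
        · positivity
      nlinarith [hν0 z]
    have hrec : ∀ y, x ≤ y → ‖m y‖ ≤ 1 + ∫ z in Set.Ioi y, w z * ‖m z‖ := by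
      intro y hxy
      have h1 : ‖m y‖ ≤ 1 + ‖∫ z in Set.Ioi y, Dker k (z - y) * V z * m z‖ := by
        rw [heq y]
        calc ‖1 + ∫ z in Set.Ioi y, Dker k (z - y) * V z * m z‖
            ≤ ‖(1:ℂ)‖ + ‖∫ z in Set.Ioi y, Dker k (z - y) * V z * m z‖ := norm_add_le _ _
          _ = 1 + _ := by rw [norm_one]
      refine h1.trans ?_
      have h2 := hbound y w hwm hw0 hwint ?_
      · linarith
      · intro z hz
        rw [hwdef]
        simp only
        have hmx : z - y ≤ max (z - x) 0 := le_max_of_le_left (by linarith)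
        exact mul_le_mul_of_nonneg_right hmx (hν0 z)
    have hvk := volterra_key w (fun y => ‖m y‖) x hwint hwm hw0
      hm_meas.norm.aestronglyMeasurable (fun y => norm_nonneg _) C hC hrec
    have hm1 : m x - 1 = ∫ z in Set.Ioi x, Dker k (z - x) * V z * m z := by
      rw [heq x]; ring
    have h3 : ‖m x - 1‖ ≤ ∫ z in Set.Ioi x, w z * ‖m z‖ := by
      rw [hm1]
      exact hbound x w hwm hw0 hwint (fun z hz => by
        rw [hwdef]
        simp only
        exact mul_le_mul_of_nonneg_right (le_max_of_le_left le_rfl) (hν0 z))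
    have h4 : (∫ z in Set.Ioi x, w z) = ∫ z in Set.Ioi x, (z - x) * ‖V z‖ := by
      apply setIntegral_congr_ae measurableSet_Ioi
      filter_upwards [hνae] with z hz1
      intro hz2
      rw [hwdef]
      simp only
      rw [max_eq_left (by simp only [Set.mem_Ioi] at hz2; linarith), hz1]
    rw [← h4]
    linarith
  · -- second conclusion
    intro x
    set p : ℝ → ℝ := fun y => 1 + max (-y) 0 with hpdef
    have hp1 : ∀ y, 1 ≤ p y := fun y => le_add_of_nonneg_right (le_max_right _ _)
    have hp_pos : ∀ y, 0 < p y := fun y => lt_of_lt_of_le one_pos (hp1 y)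
    have hpm : Measurable p := (measurable_neg.max measurable_const).const_add 1
    have kernel_p : ∀ y z : ℝ, y ≤ z → (z - y) * p z ≤ p y * (1 + |z|) := by
      intro y z hyz
      rw [hpdef]
      simp only
      rcases le_or_gt 0 y with hy | hy
      · rw [max_eq_right (by linarith : -z ≤ 0), max_eq_right (by linarith : -y ≤ 0),
          abs_of_nonneg (by linarith : (0:ℝ) ≤ z)]
        nlinarith
      · rcases le_or_gt 0 z with hz | hz
        · rw [max_eq_right (by linarith : -z ≤ 0), max_eq_left (by linarith : (0:ℝ) ≤ -y),
            abs_of_nonneg hz]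
          nlinarith
        · rw [max_eq_left (by linarith : (0:ℝ) ≤ -z), max_eq_left (by linarith : (0:ℝ) ≤ -y),
            abs_of_neg hz]
          nlinarith
    set u : ℝ → ℝ := fun y => ‖m y‖ / p y with hudef
    have hu0 : ∀ y, 0 ≤ u y := fun y => div_nonneg (norm_nonneg _) (hp_pos y).le
    have huC : ∀ y, u y ≤ C := fun y =>
      le_trans (div_le_self (norm_nonneg _) (hp1 y)) (hC y)
    have hum : AEStronglyMeasurable u volume :=
      (hm_meas.norm.div hpm).aestronglyMeasurable
    have hpu : ∀ y, p y * u y = ‖m y‖ := by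
      intro y
      have hne : p y ≠ 0 := (hp_pos y).ne'
      show p y * (‖m y‖ / p y) = ‖m y‖
      field_simp
    set w : ℝ → ℝ := fun z => (1 + |z|) * ν z with hwdef
    have hwm : Measurable w := (measurable_const.add measurable_abs).mul hνm
    have hw0 : ∀ z, 0 ≤ w z := fun z => mul_nonneg (by positivity) (hν0 z)
    have hwint : Integrable w := by
      apply (hνint.add hXνint).congr
      apply Filter.Eventually.of_forall
      intro z
      rw [hwdef]
      simp only [Pi.add_apply]
      ring
    have hwu_int : Integrable (fun z => w z * u z) := by
      apply Integrable.mono' (hwint.const_mul C) (hwm.aestronglyMeasurable.mul hum)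
      apply Filter.Eventually.of_forall
      intro z
      show ‖w z * u z‖ ≤ C * w z
      rw [Real.norm_eq_abs, abs_of_nonneg (mul_nonneg (hw0 z) (hu0 z))]
      nlinarith [hw0 z, huC z, hu0 z]
    have hrec : ∀ y, x ≤ y → u y ≤ 1 + ∫ z in Set.Ioi y, w z * u z := by
      intro y _
      have hI0 : 0 ≤ ∫ z in Set.Ioi y, w z * u z :=
        setIntegral_nonneg measurableSet_Ioi fun z _ => mul_nonneg (hw0 z) (hu0 z)
      have h1 : ‖m y‖ ≤ 1 + ‖∫ z in Set.Ioi y, Dker k (z - y) * V z * m z‖ := by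
        rw [heq y]
        calc ‖1 + ∫ z in Set.Ioi y, Dker k (z - y) * V z * m z‖
            ≤ ‖(1:ℂ)‖ + ‖∫ z in Set.Ioi y, Dker k (z - y) * V z * m z‖ := norm_add_le _ _
          _ = 1 + _ := by rw [norm_one]
      have h2 : ‖∫ z in Set.Ioi y, Dker k (z - y) * V z * m z‖
          ≤ ∫ z in Set.Ioi y, p y * (w z * u z) := by
        refine (norm_integral_le_integral_norm _).trans ?_
        apply integral_mono_of_nonneg (Filter.Eventually.of_forall fun z => norm_nonneg _)
          ((hwu_int.const_mul (p y)).integrableOn)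
        filter_upwards [ae_restrict_of_ae hνae, ae_restrict_mem measurableSet_Ioi] with z hz1 hz2
        have hz2' : y < z := hz2
        have hd : ‖Dker k (z - y)‖ ≤ z - y := Dker_bound hk (by linarith)
        rw [norm_mul, norm_mul, hz1]
        have hkp := kernel_p y z hz2'.le
        have hνu : 0 ≤ ν z * u z := mul_nonneg (hν0 z) (hu0 z)
        calc ‖Dker k (z - y)‖ * ν z * ‖m z‖ ≤ ((z - y) * ν z) * ‖m z‖ := by
              have h1' := mul_le_mul_of_nonneg_right hd (hν0 z)
              exact mul_le_mul_of_nonneg_right h1' (norm_nonneg _)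
          _ = ((z - y) * p z) * (ν z * u z) := by rw [← hpu z]; ring
          _ ≤ (p y * (1 + |z|)) * (ν z * u z) := mul_le_mul_of_nonneg_right hkp hνu
          _ = p y * (w z * u z) := by rw [hwdef]; simp only; ring
      rw [integral_const_mul] at h2
      show ‖m y‖ / p y ≤ 1 + ∫ z in Set.Ioi y, w z * u z
      rw [div_le_iff₀ (hp_pos y)]
      have hp := hp1 y
      nlinarith [hI0, h1, h2]
    have hvk := volterra_key w u x hwint hwm hw0 hum hu0 C huC hrec
    have hγ : (∫ z in Set.Ioi x, w z) ≤ (∫ y, ‖V y‖) + 2 * ∫ y, |y| * ‖V y‖ := by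
      have h5 : (∫ z in Set.Ioi x, w z) ≤ ∫ z, w z :=
        setIntegral_le_integral hwint (Filter.Eventually.of_forall hw0)
      have h6 : (∫ z, w z) = (∫ z, ν z) + ∫ z, |z| * ν z := by
        rw [← integral_add hνint hXνint]
        apply integral_congr_ae
        apply Filter.Eventually.of_forall
        intro z
        rw [hwdef]
        simp only
        ring
      have h7 : (∫ z, ν z) = ∫ y, ‖V y‖ := (integral_congr_ae hνae).symm
      have h8 : (∫ z, |z| * ν z) = ∫ y, |y| * ‖V y‖ := by
        symm
        apply integral_congr_ae
        filter_upwards [hνae] with z hz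
        rw [hz]
      rw [h6, h7, h8] at h5
      linarith
    have hux : u x ≤ Real.exp (∫ z in Set.Ioi x, w z) := by
      calc u x ≤ 1 + ∫ z in Set.Ioi x, w z * u z := hrec x le_rfl
        _ ≤ 1 + (Real.exp (∫ z in Set.Ioi x, w z) - 1) := by linarith [hvk]
        _ = _ := by ring
    have hpx : p x ≤ 1 + |x| := by
      rw [hpdef]
      simp only
      have hm1 : max (-x) 0 ≤ |x| := max_le (neg_le_abs x) (abs_nonneg x)
      linarith
    have hmx : ‖m x‖ = p x * u x := (hpu x).symm
    rw [hmx]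
    have hB := Real.exp_le_exp.mpr hγ
    have h10 : u x ≤ Real.exp ((∫ y, ‖V y‖) + 2 * ∫ y, |y| * ‖V y‖) := hux.trans hB
    have e1 : p x * u x ≤ (1 + |x|) * Real.exp ((∫ y, ‖V y‖) + 2 * ∫ y, |y| * ‖V y‖) :=
      mul_le_mul hpx h10 (hu0 x) (by positivity)
    nlinarith [Real.exp_pos ((∫ y, ‖V y‖) + 2 * ∫ y, |y| * ‖V y‖), abs_nonneg x]
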